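/- Common eigenvectors of random-Kirchhoff-model transfer matrices (Lemma 3.12): Fix b \ge 1, \mu > 0 and q_1, q_2 \in \mathbb{R}, and set T(q) := D(b) \cdot S(q) \cdot R_\mu(\mu). Assume both T(q_1) and T(q_2) are elliptic (|tr T(q_i)| < 2 for i = 1, 2); note this forces \sin\mu \ne 0. Then T(q_1) and T(q_2) have a common eigenvector in \mathbb{C}^2 \setminus \{0\} if and only if q_1 = q_2. -/

import Mathlib

/-- The dilation matrix `D(b) = diag(√b, 1/√b)`. -/
noncomputable def Dmat (b : ℝ) : Matrix (Fin 2) (Fin 2) ℝ :=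
  !![Real.sqrt b, 0; 0, 1 / Real.sqrt b]

/-- The shearing matrix `S(q)`. -/
def Smat (q : ℝ) : Matrix (Fin 2) (Fin 2) ℝ := !![1, 0; q, 1]

/-- The rotation matrix `R_μ(φ)`. -/
noncomputable def Rmat (μ φ : ℝ) : Matrix (Fin 2) (Fin 2) ℝ :=
  !![Real.cos φ, Real.sin φ / μ; -(μ * Real.sin φ), Real.cos φ]

/-- The complexification of a real 2×2 matrix. -/
def cmap (A : Matrix (Fin 2) (Fin 2) ℝ) : Matrix (Fin 2) (Fin 2) ℂ :=
  A.map (fun x => (x : ℂ))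

/-- Two real 2×2 matrices, regarded as complex matrices acting on `ℂ²`, have a common
eigenvector: a nonzero `v : ℂ²` with `A v = λ v` and `B v = λ' v`. -/
def HasCommonEigenvector (A B : Matrix (Fin 2) (Fin 2) ℝ) : Prop :=
  ∃ (v : Fin 2 → ℂ) (lam lam' : ℂ), v ≠ 0 ∧
    (cmap A).mulVec v = lam • v ∧ (cmap B).mulVec v = lam' • v

lemma Tdef (b μ q : ℝ) : Dmat b * Smat q * Rmat μ μ =
    !![Real.sqrt b * Real.cos μ, Real.sqrt b * Real.sin μ / μ;
       (q * Real.cos μ - μ * Real.sin μ) / Real.sqrt b,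
       (q * Real.sin μ / μ + Real.cos μ) / Real.sqrt b] := by
  ext i j
  fin_cases i <;> fin_cases j <;>
    simp [Dmat, Smat, Rmat, Matrix.mul_apply, Fin.sum_univ_two] <;> ring


/-- Lemma 3.12 (common eigenvectors of random-Kirchhoff-model transfer matrices):
for `b ≥ 1`, `μ > 0` and `q₁, q₂ ∈ ℝ` with both `T(qᵢ) = D(b) S(qᵢ) R_μ(μ)` elliptic
(which forces `sin μ ≠ 0`), `T(q₁)` and `T(q₂)` have a common eigenvector in
`ℂ² \ {0}` iff `q₁ = q₂`. -/
theorem rkm_common_eigenvector_iff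
    (b μ q₁ q₂ : ℝ) (hb : 1 ≤ b) (hμ : 0 < μ)
    (hell₁ : |(Dmat b * Smat q₁ * Rmat μ μ).trace| < 2)
    (hell₂ : |(Dmat b * Smat q₂ * Rmat μ μ).trace| < 2) :
    Real.sin μ ≠ 0 ∧
    (HasCommonEigenvector (Dmat b * Smat q₁ * Rmat μ μ) (Dmat b * Smat q₂ * Rmat μ μ) ↔
      q₁ = q₂) := by
  have hb0 : (0:ℝ) < b := lt_of_lt_of_le one_pos hb
  have hrb1 : 1 ≤ Real.sqrt b := by
    rw [show (1:ℝ) = Real.sqrt 1 by simp]; exact Real.sqrt_le_sqrt hb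
  set rb := Real.sqrt b with hrbdef
  have hrb0 : 0 < rb := lt_of_lt_of_le one_pos hrb1
  set s := Real.sin μ with hsdef
  set c := Real.cos μ with hcdef
  have hpyth : s ^ 2 + c ^ 2 = 1 := Real.sin_sq_add_cos_sq μ
  have hμ0 : μ ≠ 0 := ne_of_gt hμ
  have hrbne : rb ≠ 0 := ne_of_gt hrb0
  have htr : ∀ q, (Dmat b * Smat q * Rmat μ μ).trace = rb * c + (q * s / μ + c) / rb := by
    intro q
    rw [Tdef, Matrix.trace_fin_two]
    simp; rfl
  have hs : s ≠ 0 := by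
    intro hs0
    have hc : c = 1 ∨ c = -1 := by
      have hc2 : c ^ 2 = 1 := by nlinarith
      exact sq_eq_one_iff.mp hc2
    have hE : rb * c + (q₁ * s / μ + c) / rb = c * (rb + 1 / rb) := by
      rw [hs0]; field_simp; ring
    have hge : 2 ≤ rb + 1 / rb := by
      have h1 : rb * (1 / rb) = 1 := mul_one_div_cancel hrbne
      nlinarith [sq_nonneg (rb - 1)]
    rw [htr q₁, hE] at hell₁
    rcases hc with hc | hc <;> rw [hc] at hell₁
    · rw [one_mul, abs_of_nonneg (by positivity)] at hell₁; linarith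
    · rw [neg_one_mul, abs_neg, abs_of_nonneg (by positivity)] at hell₁; linarith
  refine ⟨hs, ?_, ?_⟩
  · -- common eigenvector → q₁ = q₂
    intro hce
    by_contra hq
    rw [Tdef, Tdef] at hce
    obtain ⟨v, lam, lam', hv0, h1, h2⟩ := hce
    have e10 := congrFun h1 0
    have e11 := congrFun h1 1
    have e20 := congrFun h2 0
    have e21 := congrFun h2 1
    simp [cmap, Matrix.mulVec, dotProduct, Fin.sum_univ_two] at e10 e11 e20 e21
    set R : ℂ := ((rb : ℝ) : ℂ) with hR
    set M : ℂ := ((μ : ℝ) : ℂ) with hM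
    set S : ℂ := Complex.sin ↑μ with hSdef
    set C : ℂ := Complex.cos ↑μ with hCdef
    have hRne : R ≠ 0 := Complex.ofReal_ne_zero.mpr hrbne
    have hMne : M ≠ 0 := Complex.ofReal_ne_zero.mpr hμ0
    have hSne : S ≠ 0 := by
      rw [hSdef, ← Complex.ofReal_sin]
      exact Complex.ofReal_ne_zero.mpr hs
    have pythC : S ^ 2 + C ^ 2 = 1 := Complex.sin_sq_add_cos_sq _
    have hqC : ((q₁ : ℂ)) - (q₂ : ℂ) ≠ 0 := by
      rw [sub_ne_zero]
      exact_mod_cast hq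
    have hll : (lam - lam') * v 0 = 0 := by linear_combination e20 - e10
    rcases mul_eq_zero.mp hll with hle | hv00
    · -- lam = lam'
      field_simp at e10 e11 e21
      have key : (((q₁ : ℂ) - q₂) * R) * (C * M * v 0 + S * v 1) = 0 := by
        linear_combination R * (e11 - e21) + (v 1 * M * R ^ 2) * hle
      have hlin : C * M * v 0 + S * v 1 = 0 :=
        (mul_eq_zero.mp key).resolve_left (mul_ne_zero hqC hRne)
      have hv0ne : v 0 ≠ 0 := by
        intro h0
        have hv1 : S * v 1 = 0 := by rw [h0] at hlin; simpa using hlin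
        have hv1' : v 1 = 0 := (mul_eq_zero.mp hv1).resolve_left hSne
        apply hv0
        funext i
        fin_cases i
        · simpa using h0
        · simpa using hv1' 
      have hlamv : lam * (v 0 * M) = 0 := by
        linear_combination -e10 + R * hlin
      have hlam0 : lam = 0 :=
        (mul_eq_zero.mp hlamv).resolve_right (mul_ne_zero hv0ne hMne)
      have hfinal : (R * M ^ 2) * v 0 = 0 := by
        linear_combination (-S * R) * e11 + (((q₁ : ℂ) * S + C * M) * R) * hlin -
          (M ^ 2 * R * v 0) * pythC - (S * v 1 * M * R ^ 2) * hlam0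
      exact hv0ne ((mul_eq_zero.mp hfinal).resolve_left
        (mul_ne_zero hRne (pow_ne_zero 2 hMne)))
    · -- v 0 = 0
      have hv1 : v 1 ≠ 0 := by
        intro h1'
        apply hv0
        funext i
        fin_cases i
        · simpa using hv00
        · simpa using h1'
      rw [hv00] at e10
      simp [hRne, hSne, hMne] at e10
      exact hv1 e10
  · -- q₁ = q₂ → common eigenvector
    intro hqeq
    subst hqeq
    rw [Tdef]
    rw [htr q₁, hrbdef, hsdef, hcdef] at hell₂
    obtain ⟨t, htdef⟩ : ∃ t : ℝ,
        t = Real.sqrt b * Real.cos μ + (q₁ * Real.sin μ / μ + Real.cos μ) / Real.sqrt b :=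
      ⟨_, rfl⟩
    rw [← htdef] at hell₂
    have h1t : (t / 2) ^ 2 < 1 := by rw [abs_lt] at hell₂; nlinarith
    obtain ⟨dl, hdldef⟩ : ∃ d : ℝ, d = Real.sqrt (1 - (t / 2) ^ 2) := ⟨_, rfl⟩
    have hdl2 : dl ^ 2 = 1 - (t / 2) ^ 2 := by
      rw [hdldef]; exact Real.sq_sqrt (by linarith)
    obtain ⟨lam, hlamdef⟩ : ∃ l : ℂ, l = ((t : ℝ) : ℂ) / 2 + ((dl : ℝ) : ℂ) * Complex.I :=
      ⟨_, rfl⟩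
    have hdl2C : ((dl : ℝ) : ℂ) ^ 2 = 1 - (((t : ℝ) : ℂ) / 2) ^ 2 := by exact_mod_cast hdl2
    have key : lam ^ 2 - ((t : ℝ) : ℂ) * lam + 1 = 0 := by
      rw [hlamdef]
      linear_combination ((dl : ℝ) : ℂ) ^ 2 * Complex.I_sq - hdl2C
    have hRne : ((Real.sqrt b : ℝ) : ℂ) ≠ 0 := Complex.ofReal_ne_zero.mpr hrbne
    have hMne : ((μ : ℝ) : ℂ) ≠ 0 := Complex.ofReal_ne_zero.mpr hμ0
    have pythC : Complex.sin ↑μ ^ 2 + Complex.cos ↑μ ^ 2 = 1 := Complex.sin_sq_add_cos_sq _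
    have htC : ((t : ℝ) : ℂ) * (((Real.sqrt b : ℝ) : ℂ) * ((μ : ℝ) : ℂ)) =
        ((Real.sqrt b : ℝ) : ℂ) ^ 2 * Complex.cos ↑μ * ↑μ + (q₁ : ℂ) * Complex.sin ↑μ +
          Complex.cos ↑μ * ↑μ := by
      rw [htdef]
      push_cast [Complex.ofReal_sin, Complex.ofReal_cos]
      field_simp
      ring
    have hBne : Real.sqrt b * Real.sin μ / μ ≠ 0 := div_ne_zero (mul_ne_zero hrbne hs) hμ0
    refine ⟨![((Real.sqrt b * Real.sin μ / μ : ℝ) : ℂ),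
        lam - ((Real.sqrt b * Real.cos μ : ℝ) : ℂ)], lam, lam, ?_, ?_, ?_⟩ <;>
      [skip; skip; skip]
    · intro h
      have h0 := congrFun h 0
      simp only [Matrix.cons_val_zero, Pi.zero_apply] at h0
      exact hBne (by exact_mod_cast h0)
    · funext i
      fin_cases i
      · simp [cmap, Matrix.mulVec, dotProduct, Fin.sum_univ_two]
        ring
      · simp [cmap, Matrix.mulVec, dotProduct, Fin.sum_univ_two]
        field_simp
        linear_combination
          (-(((Real.sqrt b : ℝ) : ℂ) * ((μ : ℝ) : ℂ))) * key +
          (-(((μ : ℝ) : ℂ) * ((Real.sqrt b : ℝ) : ℂ))) * pythC +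
          (-lam) * htC
    · funext i
      fin_cases i
      · simp [cmap, Matrix.mulVec, dotProduct, Fin.sum_univ_two]
        ring
      · simp [cmap, Matrix.mulVec, dotProduct, Fin.sum_univ_two]
        field_simp
        linear_combination
          (-(((Real.sqrt b : ℝ) : ℂ) * ((μ : ℝ) : ℂ))) * key +
          (-(((μ : ℝ) : ℂ) * ((Real.sqrt b : ℝ) : ℂ))) * pythC +
          (-lam) * htC
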